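/- Let (V,⟨·,·,·⟩,α) be a multiplicative Hom-Jordan supertriple system and β an even self-morphism of it commuting with α. For n ≥ 0, define ⟨x,y,z⟩_{β^n} := β^n(⟨x,y,z⟩). Then (V, ⟨·,·,·⟩_{β^n}, β^n ∘ α) is a multiplicative Hom-Jordan supertriple system. -/
import Mathlib


def sgn (K : Type*) [Field K] (i j : ZMod 2) : K := (-1 : K) ^ (i * j).val

def IsBilin (K : Type*) {A : Type*} [Field K] [AddCommGroup A] [Module K A]
    (f : A → A → A) : Prop :=
  (∀ (c : K) (x y : A), f (c • x) y = c • f x y) ∧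
  (∀ x x' y : A, f (x + x') y = f x y + f x' y) ∧
  (∀ (c : K) (x y : A), f x (c • y) = c • f x y) ∧
  (∀ x y y' : A, f x (y + y') = f x y + f x y')

def IsTrilin (K : Type*) {A : Type*} [Field K] [AddCommGroup A] [Module K A]
    (f : A → A → A → A) : Prop :=
  (∀ (c : K) (x y z : A), f (c • x) y z = c • f x y z) ∧
  (∀ x x' y z : A, f (x + x') y z = f x y z + f x' y z) ∧
  (∀ (c : K) (x y z : A), f x (c • y) z = c • f x y z) ∧
  (∀ x y y' z : A, f x (y + y') z = f x y z + f x y' z) ∧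
  (∀ (c : K) (x y z : A), f x y (c • z) = c • f x y z) ∧
  (∀ x y z z' : A, f x y (z + z') = f x y z + f x y z')

def asc {A : Type*} [AddCommGroup A] (mul : A → A → A) (x y z : A) : A :=
  mul (mul x y) z - mul x (mul y z)

def hasc {A : Type*} [AddCommGroup A] (mul : A → A → A) (α : A → A) (x y z : A) : A :=
  mul (mul x y) (α z) - mul (α x) (mul y z)

def br (K : Type*) {A : Type*} [Field K] [AddCommGroup A] [Module K A]
    (mul : A → A → A) (i j : ZMod 2) (x y : A) : A :=
  (2 : K)⁻¹ • (mul x y - sgn K i j • mul y x)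

def jp (K : Type*) {A : Type*} [Field K] [AddCommGroup A] [Module K A]
    (mul : A → A → A) (i j : ZMod 2) (x y : A) : A :=
  (2 : K)⁻¹ • (mul x y + sgn K i j • mul y x)

/-- A multiplicative Hom-Jordan supertriple system structure. -/
structure IsHomJTS (K : Type*) {V : Type*} [Field K] [AddCommGroup V] [Module K V]
    (𝒱 : ZMod 2 → Submodule K V) (T : V → V → V → V) (θ : V → V) : Prop where
  trilin : IsTrilin K T
  grade : ∀ (i j k : ZMod 2) (x y z : V),
    x ∈ 𝒱 i → y ∈ 𝒱 j → z ∈ 𝒱 k → T x y z ∈ 𝒱 (i + j + k)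
  theta_smul : ∀ (c : K) (x : V), θ (c • x) = c • θ x
  theta_add : ∀ x y : V, θ (x + y) = θ x + θ y
  theta_even : ∀ (i : ZMod 2) (x : V), x ∈ 𝒱 i → θ x ∈ 𝒱 i
  mult : ∀ x y z : V, θ (T x y z) = T (θ x) (θ y) (θ z)
  outer : ∀ (i j k : ZMod 2) (x y z : V), x ∈ 𝒱 i → y ∈ 𝒱 j → z ∈ 𝒱 k →
    T x y z = (sgn K i j * sgn K i k * sgn K j k) • T z y x
  hjts : ∀ (i j p q r : ZMod 2) (x y u v w : V),
    x ∈ 𝒱 i → y ∈ 𝒱 j → u ∈ 𝒱 p → v ∈ 𝒱 q → w ∈ 𝒱 r →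
    T (θ x) (θ y) (T u v w) - T (T x y u) (θ v) (θ w)
      = sgn K (i + j) (p + q) •
          (T (θ u) (θ v) (T x y w) - T (θ u) (T v x y) (θ w))

/-- Theorem 6.1: twisting a multiplicative Hom-Jordan supertriple system by powers
of an even self-morphism commuting with the twist yields a multiplicative
Hom-Jordan supertriple system. -/
theorem stmt11 {K V : Type*} [Field K] [AddCommGroup V] [Module K V]
    (𝒱 : ZMod 2 → Submodule K V) (hds : DirectSum.IsInternal 𝒱)
    (T : V → V → V → V) (α : V → V)
    (hJ : IsHomJTS K 𝒱 T α)
    (β : V → V)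
    (hβsmul : ∀ (c : K) (x : V), β (c • x) = c • β x)
    (hβadd : ∀ x y : V, β (x + y) = β x + β y)
    (hβeven : ∀ (i : ZMod 2) (x : V), x ∈ 𝒱 i → β x ∈ 𝒱 i)
    (hβT : ∀ x y z : V, β (T x y z) = T (β x) (β y) (β z))
    (hβα : ∀ x : V, β (α x) = α (β x))
    (n : ℕ) :
    IsHomJTS K 𝒱 (fun x y z => β^[n] (T x y z)) (fun x => β^[n] (α x)) := by
  -- iterate lemmas
  have hNsmul : ∀ (c : K) (x : V), β^[n] (c • x) = c • β^[n] x := by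
    induction n with
    | zero => intro c x; simp
    | succ m ih =>
      intro c x
      simp only [Function.iterate_succ_apply', ih, hβsmul]
  have hNadd : ∀ x y : V, β^[n] (x + y) = β^[n] x + β^[n] y := by
    clear hNsmul
    induction n with
    | zero => intro x y; simp
    | succ m ih =>
      intro x y
      simp only [Function.iterate_succ_apply', ih, hβadd]
  have hNeven : ∀ (i : ZMod 2) (x : V), x ∈ 𝒱 i → β^[n] x ∈ 𝒱 i := by
    clear hNsmul hNadd
    induction n with
    | zero => intro i x hx; simpa using hx
    | succ m ih =>
      intro i x hx
      rw [Function.iterate_succ_apply']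
      exact hβeven i _ (ih i x hx)
  have hNT : ∀ x y z : V, β^[n] (T x y z) = T (β^[n] x) (β^[n] y) (β^[n] z) := by
    clear hNsmul hNadd hNeven
    induction n with
    | zero => intro x y z; simp
    | succ m ih =>
      intro x y z
      simp only [Function.iterate_succ_apply', ih, hβT]
  have hNα : ∀ x : V, β^[n] (α x) = α (β^[n] x) := by
    clear hNsmul hNadd hNeven hNT
    induction n with
    | zero => intro x; simp
    | succ m ih =>
      intro x
      simp only [Function.iterate_succ_apply', ih, hβα]
  have hNsub : ∀ x y : V, β^[n] (x - y) = β^[n] x - β^[n] y := by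
    intro x y
    rw [sub_eq_add_neg, ← neg_one_smul K y, hNadd, hNsmul, neg_one_smul,
      ← sub_eq_add_neg]
  obtain ⟨t1, t2, t3, t4, t5, t6⟩ := hJ.trilin
  constructor
  · exact ⟨fun c x y z => by simp only [t1, hNsmul],
      fun x x' y z => by simp only [t2, hNadd],
      fun c x y z => by simp only [t3, hNsmul],
      fun x y y' z => by simp only [t4, hNadd],
      fun c x y z => by simp only [t5, hNsmul],
      fun x y z z' => by simp only [t6, hNadd]⟩
  · intro i j k x y z hx hy hz
    exact hNeven _ _ (hJ.grade i j k x y z hx hy hz)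
  · intro c x
    rw [hJ.theta_smul, hNsmul]
  · intro x y
    rw [hJ.theta_add, hNadd]
  · intro i x hx
    exact hNeven i _ (hJ.theta_even i x hx)
  · intro x y z
    simp only [hNα, hNT, hJ.mult]
  · intro i j k x y z hx hy hz
    rw [hJ.outer i j k x y z hx hy hz, hNsmul]
  · intro i j p q r x y u v w hx hy hu hv hw
    have key := hJ.hjts i j p q r x y u v w hx hy hu hv hw
    have key2 := congrArg (β^[n] ∘ β^[n]) key
    simp only [Function.comp_apply, hNsub, hNsmul, hNT, hNα] at key2
    simpa only [hNα, hNT] using key2
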